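/- Let (ξ_i) be i.i.d. real random variables with E ξ_0 = 0 and E ξ_0² < ∞, and let γ_n > 0 with γ_n → 0, k_n → ∞, √{k_n} γ_n → ∞. Then E[ (γ_n/√{k_n})·e^{-√{k_n} γ_n}·( (1/√{k_n})·∑_{j=1}^{k_n−1} e^{jγ_n/√{k_n}} ∑_{i=1}^{j} ξ_{k_n−i} − (e^{√{k_n} γ_n}/γ_n)·∑_{i=1}^{k_n−1} ξ_i ) ]² → 0. -/

import Mathlib

open Filter MeasureTheory ProbabilityTheory Finset

lemma sum_Icc_reflect {M : Type*} [AddCommMonoid M] (k : ℕ) (f : ℕ → M) :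
    ∑ i ∈ Finset.Icc 1 (k-1), f (k - i) = ∑ i ∈ Finset.Icc 1 (k-1), f i := by
  refine Finset.sum_nbij' (fun i => k - i) (fun i => k - i) ?_ ?_ ?_ ?_ ?_ <;>
    intro a ha <;> simp only [Finset.mem_Icc] at * <;> omega

lemma geom_Icc (r : ℝ) (i m : ℕ) (him : i ≤ m + 1) :
    (r - 1) * ∑ j ∈ Finset.Icc i m, r ^ j = r ^ (m+1) - r ^ i := by
  have h : Finset.Icc i m = (Finset.range (m + 1 - i)).map ⟨fun t => i + t, add_right_injective i⟩ := by
    ext x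
    simp only [Finset.mem_Icc, Finset.mem_map, Finset.mem_range, Function.Embedding.coeFn_mk]
    constructor
    · intro hx; exact ⟨x - i, by omega, by omega⟩
    · rintro ⟨t, ht, rfl⟩; omega
  rw [h, Finset.sum_map]
  simp only [Function.Embedding.coeFn_mk, pow_add, ← Finset.mul_sum]
  have hg := geom_sum_mul r (m + 1 - i)
  have hi : i + (m + 1 - i) = m + 1 := by omega
  have h2 : (r - 1) * (r ^ i * ∑ t ∈ Finset.range (m + 1 - i), r ^ t)
      = r ^ i * ((∑ t ∈ Finset.range (m + 1 - i), r ^ t) * (r - 1)) := by ring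
  rw [h2, hg, mul_sub, mul_one, ← pow_add, hi]; ring

lemma second_moment {Ω : Type*} [MeasurableSpace Ω] (μ : Measure Ω) [IsProbabilityMeasure μ]
    (ξ : ℕ → Ω → ℝ)
    (hindep : iIndepFun ξ μ)
    (hid : ∀ i, IdentDistrib (ξ i) (ξ 0) μ μ)
    (hmean : μ[ξ 0] = 0) (hL2 : MemLp (ξ 0) 2 μ)
    (s : Finset ℕ) (b : ℕ → ℝ) :
    ∫ ω, (∑ p ∈ s, b p * ξ p ω)^2 ∂μ = (∑ p ∈ s, (b p)^2) * ∫ ω, (ξ 0 ω)^2 ∂μ := by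
  set X : ℕ → Ω → ℝ := fun p ω => b p * ξ p ω with hX
  have hXmem : ∀ p, MemLp (X p) 2 μ := fun p => ((hid p).symm.memLp_snd hL2).const_mul (b p)
  have hmean' : ∀ p, μ[ξ p] = 0 := fun p => (hid p).integral_eq.trans hmean
  have hvar : variance (∑ p ∈ s, X p) μ = ∑ p ∈ s, (b p)^2 * variance (ξ 0) μ := by
    rw [IndepFun.variance_sum (fun p _ => hXmem p)
      (fun p _ q _ hpq => (hindep.indepFun hpq).comp
        (measurable_const_mul (b p)) (measurable_const_mul (b q)))]
    exact Finset.sum_congr rfl fun p _ => by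
      rw [hX, variance_const_mul, (hid p).variance_eq]
  have hmemY : MemLp (∑ p ∈ s, X p) 2 μ := memLp_finset_sum' s (fun p _ => hXmem p)
  have hY0 : μ[∑ p ∈ s, X p] = 0 := by
    simp only [Finset.sum_apply]
    rw [integral_finset_sum s (fun p _ => ((hXmem p).integrable one_le_two))]
    simp [hX, integral_const_mul, hmean']
  have h2 : variance (∑ p ∈ s, X p) μ = μ[(∑ p ∈ s, X p) ^ 2] := by
    rw [variance_eq_integral hmemY.aestronglyMeasurable.aemeasurable, hY0]; simp
  calc ∫ ω, (∑ p ∈ s, b p * ξ p ω)^2 ∂μ = μ[(∑ p ∈ s, X p) ^ 2] := by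
        congr 1; funext ω; simp [hX]
    _ = variance (∑ p ∈ s, X p) μ := h2.symm
    _ = ∑ p ∈ s, (b p)^2 * variance (ξ 0) μ := hvar
    _ = (∑ p ∈ s, (b p)^2) * ∫ ω, (ξ 0 ω)^2 ∂μ := by
        rw [← Finset.sum_mul, (show variance (ξ 0) μ = μ[ξ 0 ^ 2] by
          rw [variance_eq_integral hL2.aestronglyMeasurable.aemeasurable, hmean]; simp)]
        rfl

set_option maxHeartbeats 1000000 in
lemma key_bound {Ω : Type*} [MeasurableSpace Ω] (μ : Measure Ω) [IsProbabilityMeasure μ]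
    (ξ : ℕ → Ω → ℝ)
    (hindep : iIndepFun ξ μ)
    (hid : ∀ i, IdentDistrib (ξ i) (ξ 0) μ μ)
    (hmean : μ[ξ 0] = 0) (hL2 : MemLp (ξ 0) 2 μ)
    (γ : ℝ) (hγ : 0 < γ) (k : ℕ) (hk1 : 1 ≤ k) :
    ∫ ω, ((γ / Real.sqrt k) * Real.exp (-(Real.sqrt k) * γ) *
          ((1 / Real.sqrt k) *
              ∑ j ∈ Finset.Icc 1 (k - 1), Real.exp (j * γ / Real.sqrt k) *
                ∑ i ∈ Finset.Icc 1 j, ξ (k - i) ω -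
            (Real.exp (Real.sqrt k * γ) / γ) *
              ∑ i ∈ Finset.Icc 1 (k - 1), ξ i ω)) ^ 2 ∂μ
      ≤ (2 * γ^2 + 1 / (Real.sqrt k * γ)) * ∫ ω, (ξ 0 ω)^2 ∂μ := by
  set s : ℝ := Real.sqrt k with hsdef
  have hs : 0 < s := Real.sqrt_pos.2 (by exact_mod_cast Nat.pos_of_ne_zero (by omega))
  have hs2 : s ^ 2 = (k : ℝ) := Real.sq_sqrt (Nat.cast_nonneg k)
  set a : ℝ := γ / s with hadef
  have ha : 0 < a := div_pos hγ hs
  set r : ℝ := Real.exp a with hrdef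
  have hr0 : 0 < r := Real.exp_pos a
  set m : ℕ := k - 1 with hmdef
  have hm : m + 1 = k := by omega
  have hγeq : γ = s * a := by rw [hadef]; field_simp
  have hka : s * γ = (k : ℝ) * a := by rw [hγeq, ← hs2]; ring
  have hexp_j : ∀ j : ℕ, Real.exp (j * γ / s) = r ^ j := by
    intro j; rw [mul_div_assoc, ← hadef, ← Real.exp_nat_mul]
  have hRk : Real.exp (s * γ) = r ^ k := by rw [hka, ← Real.exp_nat_mul]
  set R : ℝ := r ^ k with hRdef
  have hR0 : 0 < R := pow_pos hr0 k
  set T : ℕ → ℝ := fun i => ∑ j ∈ Finset.Icc i m, r ^ j with hTdef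
  set C : ℝ := (γ / s) * R⁻¹ with hCdef
  set d : ℕ → ℝ := fun p => C * ((1 / s) * T (k - p) - R / γ) with hddef
  -- pointwise rewrite of the integrand
  have hA : ∀ ω, ∑ j ∈ Finset.Icc 1 m, Real.exp (j * γ / s) * ∑ i ∈ Finset.Icc 1 j, ξ (k - i) ω
      = ∑ p ∈ Finset.Icc 1 m, T (k - p) * ξ p ω := by
    intro ω
    calc ∑ j ∈ Finset.Icc 1 m, Real.exp (j * γ / s) * ∑ i ∈ Finset.Icc 1 j, ξ (k - i) ω
        = ∑ j ∈ Finset.Icc 1 m, ∑ i ∈ Finset.Icc 1 j, r ^ j * ξ (k - i) ω := by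
          refine Finset.sum_congr rfl fun j _ => ?_
          rw [hexp_j j, Finset.mul_sum]
      _ = ∑ i ∈ Finset.Icc 1 m, ∑ j ∈ Finset.Icc i m, r ^ j * ξ (k - i) ω := by
          refine Finset.sum_comm' ?_
          intro x y; simp only [Finset.mem_Icc]; omega
      _ = ∑ i ∈ Finset.Icc 1 m, T i * ξ (k - i) ω := by
          refine Finset.sum_congr rfl fun i _ => ?_
          rw [hTdef, Finset.sum_mul]
      _ = ∑ i ∈ Finset.Icc 1 m, T (k - (k - i)) * ξ (k - i) ω := by
          refine Finset.sum_congr rfl fun i hi => ?_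
          simp only [Finset.mem_Icc] at hi
          congr 2
          omega
      _ = ∑ p ∈ Finset.Icc 1 m, T (k - p) * ξ p ω :=
          sum_Icc_reflect k (fun p => T (k - p) * ξ p ω)
  have hpt : ∀ ω, ((γ / s) * Real.exp (-s * γ) *
          ((1 / s) * ∑ j ∈ Finset.Icc 1 m, Real.exp (j * γ / s) *
            ∑ i ∈ Finset.Icc 1 j, ξ (k - i) ω -
            (Real.exp (s * γ) / γ) * ∑ i ∈ Finset.Icc 1 m, ξ i ω)) ^ 2
      = (∑ p ∈ Finset.Icc 1 m, d p * ξ p ω) ^ 2 := by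
    intro ω
    rw [hA ω, show Real.exp (-s * γ) = R⁻¹ by rw [neg_mul, Real.exp_neg, hRk], hRk]
    congr 1
    have h1 : (1 / s) * ∑ p ∈ Finset.Icc 1 m, T (k - p) * ξ p ω
        - (R / γ) * ∑ p ∈ Finset.Icc 1 m, ξ p ω
        = ∑ p ∈ Finset.Icc 1 m, ((1 / s) * T (k - p) - R / γ) * ξ p ω := by
      rw [Finset.mul_sum, Finset.mul_sum, ← Finset.sum_sub_distrib]
      exact Finset.sum_congr rfl fun p _ => by ring
    rw [h1, Finset.mul_sum]
    exact Finset.sum_congr rfl fun p _ => by rw [hddef]; ring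
  have hint : ∫ ω, ((γ / s) * Real.exp (-s * γ) *
          ((1 / s) * ∑ j ∈ Finset.Icc 1 m, Real.exp (j * γ / s) *
            ∑ i ∈ Finset.Icc 1 j, ξ (k - i) ω -
            (Real.exp (s * γ) / γ) * ∑ i ∈ Finset.Icc 1 m, ξ i ω)) ^ 2 ∂μ
      = (∑ p ∈ Finset.Icc 1 m, (d p)^2) * ∫ ω, (ξ 0 ω)^2 ∂μ := by
    simp only [hpt]
    exact second_moment μ ξ hindep hid hmean hL2 _ d
  rw [hint]
  -- now the coefficient bound
  have hσ2 : 0 ≤ ∫ ω, (ξ 0 ω)^2 ∂μ := integral_nonneg fun ω => sq_nonneg _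
  refine mul_le_mul_of_nonneg_right ?_ hσ2
  -- ∑ d p ^ 2 ≤ 2 γ² + 1/(s γ)
  have hrefl : ∑ p ∈ Finset.Icc 1 m, (d p)^2
      = ∑ i ∈ Finset.Icc 1 m, (C * ((1 / s) * T i - R / γ))^2 :=
    sum_Icc_reflect k (fun i => (C * ((1 / s) * T i - R / γ))^2)
  rw [hrefl]
  -- basic exp inequalities
  have hra : a + 1 ≤ r := Real.add_one_le_exp a
  have hr1 : (1:ℝ) ≤ r := by linarith
  have hrinv : 1 - a ≤ r⁻¹ := by
    have := Real.add_one_le_exp (-a)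
    rw [Real.exp_neg, ← hrdef] at this
    linarith
  have hr2 : r - 1 ≤ a * r := by
    have h := mul_le_mul_of_nonneg_right hrinv hr0.le
    rw [inv_mul_cancel₀ hr0.ne'] at h
    nlinarith
  -- per-term bound
  have hterm : ∀ i ∈ Finset.Icc 1 m, (C * ((1 / s) * T i - R / γ))^2
      ≤ C^2 / γ^2 * (2 * a^2 * R^2 + 2 * (r^2)^i) := by
    intro i hi
    simp only [Finset.mem_Icc] at hi
    have hT : (r - 1) * T i = R - r ^ i := by
      rw [hTdef]
      have := geom_Icc r i m (by omega)
      rw [hm] at this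
      exact this
    have hTnn : 0 ≤ T i := Finset.sum_nonneg fun j _ => pow_nonneg hr0.le j
    have hRi : r ^ i ≤ R := by
      rw [hRdef]; exact pow_le_pow_right₀ hr1 (by omega)
    have hri0 : 0 < r ^ i := pow_pos hr0 i
    have h1 : a * T i ≤ R - r ^ i := by
      calc a * T i ≤ (r - 1) * T i :=
            mul_le_mul_of_nonneg_right (by linarith) hTnn
        _ = R - r ^ i := hT
    have h2 : R - r ^ i ≤ a * r * T i := by
      calc R - r ^ i = (r - 1) * T i := hT.symm
        _ ≤ (a * r) * T i := mul_le_mul_of_nonneg_right hr2 hTnn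
        _ = a * r * T i := by ring
    have h4 : a * r * T i = a * T i + a * ((r - 1) * T i) := by ring
    rw [hT] at h4
    have h5 : a * (R - r ^ i) = a * R - a * r ^ i := by ring
    have claim_lower : -(a * R + r ^ i) ≤ a * T i - R := by
      linarith [h2, h4, h5, mul_nonneg ha.le hri0.le]
    have claim_upper : a * T i - R ≤ a * R + r ^ i := by
      linarith [h1, mul_nonneg ha.le hR0.le, hri0.le]
    have hTi' : (1 / s) * T i - R / γ = (a * T i - R) / γ := by
      rw [hγeq]; field_simp
    have habs : |(1 / s) * T i - R / γ| ≤ (a * R + r ^ i) / γ := by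
      rw [hTi', abs_div, abs_of_pos hγ]
      gcongr
      exact abs_le.2 ⟨claim_lower, claim_upper⟩
    have hsq : ((1 / s) * T i - R / γ)^2 ≤ ((a * R + r ^ i) / γ)^2 := by
      rw [← sq_abs]
      apply pow_le_pow_left₀ (abs_nonneg _) habs
    have hsq2 : ((a * R + r ^ i) / γ)^2 ≤ (2 * a^2 * R^2 + 2 * (r^2)^i) / γ^2 := by
      rw [div_pow]
      apply div_le_div_of_nonneg_right ?_ (by positivity)
      have : (r^2)^i = (r^i)^2 := by rw [← pow_mul, ← pow_mul, Nat.mul_comm]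
      nlinarith [sq_nonneg (a * R - r ^ i)]
    calc (C * ((1 / s) * T i - R / γ))^2 = C^2 * ((1 / s) * T i - R / γ)^2 := by ring
      _ ≤ C^2 * ((2 * a^2 * R^2 + 2 * (r^2)^i) / γ^2) := by
          apply mul_le_mul_of_nonneg_left (hsq.trans hsq2) (sq_nonneg C)
      _ = C^2 / γ^2 * (2 * a^2 * R^2 + 2 * (r^2)^i) := by ring
  have hsum := Finset.sum_le_sum hterm
  -- geometric sum bound
  have hgeo : ∑ i ∈ Finset.Icc 1 m, (r^2)^i ≤ R^2 / (2 * a) := by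
    have hid2 : (r^2 - 1) * ∑ i ∈ Finset.Icc 1 m, (r^2)^i = (r^2)^(m+1) - (r^2)^1 := 
       geom_Icc (r^2) 1 m (by omega)
    have hr2a : 2 * a ≤ r^2 - 1 := by
      have h := Real.add_one_le_exp (2 * a)
      have he : Real.exp (2 * a) = r^2 := by rw [two_mul, Real.exp_add, hrdef]; ring
      rw [he] at h; linarith
    have hgnn : 0 ≤ ∑ i ∈ Finset.Icc 1 m, (r^2)^i :=
      Finset.sum_nonneg fun j _ => pow_nonneg (sq_nonneg r) j
    have hR2 : (r^2)^(m+1) = R^2 := by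
      rw [← pow_mul, Nat.mul_comm, pow_mul, hm, hRdef]
    rw [le_div_iff₀ (by positivity)]
    have h6 := mul_le_mul_of_nonneg_right hr2a hgnn
    rw [hid2, hR2, pow_one] at h6
    have h7 : 0 ≤ r^2 := sq_nonneg r
    linarith
  -- count
  have hcard : ((Finset.Icc 1 m).card : ℝ) = m := by
    rw [Nat.card_Icc]; simp
  have hsum_const : ∑ _i ∈ Finset.Icc 1 m, (C^2 / γ^2 * (2 * a^2 * R^2)) 
      = (m : ℝ) * (C^2 / γ^2 * (2 * a^2 * R^2)) := by
    rw [Finset.sum_const, nsmul_eq_mul, hcard]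
  have htotal : ∑ i ∈ Finset.Icc 1 m, (C * ((1 / s) * T i - R / γ))^2
      ≤ (m : ℝ) * (C^2 / γ^2 * (2 * a^2 * R^2)) + C^2 / γ^2 * (2 * (R^2 / (2 * a))) := by
    refine hsum.trans ?_
    have : ∑ i ∈ Finset.Icc 1 m, C^2 / γ^2 * (2 * a^2 * R^2 + 2 * (r^2)^i)
        = ∑ _i ∈ Finset.Icc 1 m, (C^2 / γ^2 * (2 * a^2 * R^2))
          + C^2 / γ^2 * (2 * ∑ i ∈ Finset.Icc 1 m, (r^2)^i) := by
      calc ∑ i ∈ Finset.Icc 1 m, C^2 / γ^2 * (2 * a^2 * R^2 + 2 * (r^2)^i)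
          = ∑ i ∈ Finset.Icc 1 m,
              (C^2 / γ^2 * (2 * a^2 * R^2) + (C^2 / γ^2 * 2) * (r^2)^i) :=
            Finset.sum_congr rfl fun i _ => by ring
        _ = ∑ _i ∈ Finset.Icc 1 m, (C^2 / γ^2 * (2 * a^2 * R^2))
              + (C^2 / γ^2 * 2) * ∑ i ∈ Finset.Icc 1 m, (r^2)^i := by
            rw [Finset.sum_add_distrib, Finset.mul_sum]
        _ = ∑ _i ∈ Finset.Icc 1 m, (C^2 / γ^2 * (2 * a^2 * R^2))
              + C^2 / γ^2 * (2 * ∑ i ∈ Finset.Icc 1 m, (r^2)^i) := by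
            ring
    rw [this, hsum_const]
    have hC2 : 0 ≤ C^2 / γ^2 * 2 := by positivity
    gcongr
  refine htotal.trans ?_
  -- final algebra
  have hCval : C^2 = γ^2 / (s^2 * R^2) := by
    rw [hCdef]; field_simp
  have hmk : (m : ℝ) ≤ (k : ℝ) := by exact_mod_cast Nat.sub_le k 1
  have hk1' : (1:ℝ) ≤ (k:ℝ) := by exact_mod_cast hk1
  have e1 : (m : ℝ) * (C^2 / γ^2 * (2 * a^2 * R^2)) = 2 * (m:ℝ) * a^2 / s^2 := by
    rw [hCval]; field_simp
  have e2 : C^2 / γ^2 * (2 * (R^2 / (2 * a))) = 1 / (s^2 * a) := by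
    rw [hCval]; field_simp
  rw [e1, e2]
  have ha2 : a^2 = γ^2 / s^2 := by rw [hadef]; field_simp
  have hs2a : s^2 * a = s * γ := by rw [hadef]; field_simp
  rw [hs2a, ha2]
  have hkpos : (0:ℝ) < (k:ℝ) := by linarith
  have hfin : 2 * (m:ℝ) * (γ^2 / s^2) / s^2 ≤ 2 * γ^2 := by
    rw [hs2]
    have step1 : 2 * (m:ℝ) * (γ^2 / (k:ℝ)) / (k:ℝ) ≤ 2 * (k:ℝ) * (γ^2 / (k:ℝ)) / (k:ℝ) := by
      gcongr
    have step2 : 2 * (k:ℝ) * (γ^2 / (k:ℝ)) / (k:ℝ) = 2 * γ^2 / (k:ℝ) := by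
      field_simp
    have step3 : 2 * γ^2 / (k:ℝ) ≤ 2 * γ^2 := div_le_self (by positivity) hk1'
    calc 2 * (m:ℝ) * (γ^2 / (k:ℝ)) / (k:ℝ) ≤ 2 * (k:ℝ) * (γ^2 / (k:ℝ)) / (k:ℝ) := step1
      _ = 2 * γ^2 / (k:ℝ) := step2
      _ ≤ 2 * γ^2 := step3
  linarith [hfin]

open Filter MeasureTheory ProbabilityTheory in
theorem lemApp_L2 {Ω : Type*} [MeasurableSpace Ω] (μ : Measure Ω) [IsProbabilityMeasure μ]
    (ξ : ℕ → Ω → ℝ) (hmeas : ∀ i, Measurable (ξ i))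
    (hindep : iIndepFun ξ μ)
    (hid : ∀ i, IdentDistrib (ξ i) (ξ 0) μ μ)
    (hmean : μ[ξ 0] = 0) (hL2 : MemLp (ξ 0) 2 μ)
    (γ : ℕ → ℝ) (k : ℕ → ℕ) (hγpos : ∀ n, 0 < γ n)
    (hγ0 : Tendsto γ atTop (nhds 0)) (hk : Tendsto k atTop atTop)
    (hkγ : Tendsto (fun n => Real.sqrt (k n) * γ n) atTop atTop) :
    Tendsto (fun n => ∫ ω,
        ((γ n / Real.sqrt (k n)) * Real.exp (-(Real.sqrt (k n)) * γ n) *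
          ((1 / Real.sqrt (k n)) *
              ∑ j ∈ Finset.Icc 1 (k n - 1), Real.exp (j * γ n / Real.sqrt (k n)) *
                ∑ i ∈ Finset.Icc 1 j, ξ (k n - i) ω -
            (Real.exp (Real.sqrt (k n) * γ n) / γ n) *
              ∑ i ∈ Finset.Icc 1 (k n - 1), ξ i ω)) ^ 2 ∂μ)
      atTop (nhds 0) := by
  refine squeeze_zero'
    (g := fun n => (2 * (γ n)^2 + 1 / (Real.sqrt (k n) * γ n)) * ∫ ω, (ξ 0 ω)^2 ∂μ)
    (Filter.Eventually.of_forall fun n => integral_nonneg fun ω => sq_nonneg _) ?_ ?_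
  · filter_upwards [hk.eventually_ge_atTop 1] with n hn
    exact key_bound μ ξ hindep hid hmean hL2 (γ n) (hγpos n) (k n) hn
  · have h1 : Tendsto (fun n => 2 * (γ n)^2) atTop (nhds (0:ℝ)) := by
      have h := (hγ0.mul hγ0).const_mul (2:ℝ)
      simp only [mul_zero] at h
      refine h.congr fun n => by ring
    have h2 : Tendsto (fun n => 1 / (Real.sqrt (k n) * γ n)) atTop (nhds (0:ℝ)) := by
      have h := hkγ.inv_tendsto_atTop
      refine h.congr fun n => ?_
      simp [one_div]
    have h3 := (h1.add h2).mul_const (∫ ω, (ξ 0 ω)^2 ∂μ)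
    simpa using h3
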